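/- arXiv:2605.02526 — 5 statements merged into one kernel-verified Lean document; each statement's English description precedes it below -/
import Mathlib

section
/- Let X ⊆ ℝⁿ, let X_I ⊆ X be the initial set and X_U ⊆ X the unsafe set, let f : ℝⁿ → ℝⁿ be a vector field, and let B : ℝⁿ → ℝ be differentiable. Assume (i) B(x) > 0 for all x ∈ X_U, (ii) B(x) ≤ 0 for all x ∈ X_I, and (iii) for all x ∈ X with B(x) = 0, the Lie derivative satisfies L_f B(x) < 0. Then the system ẋ = f(x) is safe: for every T ≥ 0 and every trajectory x : [0,T] → ℝⁿ of ẋ = f(x) with x(t) ∈ X for all t ∈ [0,T] and x(0) ∈ X_I, we have x(t) ∉ X_U for all t ∈ [0,T]. -/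
open Set

/-- **Barrier certificate theorem.**
If `B` is differentiable, positive on the unsafe set `XU`, non-positive on the
initial set `XI`, and its Lie derivative `⟪∇B(x), f(x)⟫` is negative on the
zero-level set of `B` within the state space `X`, then no trajectory of
`ẋ = f(x)` that stays in `X` and starts in `XI` ever reaches `XU`. -/
theorem barrier_certificate_safety {n : ℕ}
    (X XI XU : Set (EuclideanSpace ℝ (Fin n)))
    (hXI : XI ⊆ X) (hXU : XU ⊆ X)
    (f : EuclideanSpace ℝ (Fin n) → EuclideanSpace ℝ (Fin n))
    (B : EuclideanSpace ℝ (Fin n) → ℝ) (hB : Differentiable ℝ B)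
    (hU : ∀ x ∈ XU, B x > 0)
    (hI : ∀ x ∈ XI, B x ≤ 0)
    (hL : ∀ x ∈ X, B x = 0 → (inner ℝ (gradient B x) (f x) : ℝ) < 0) :
    ∀ (T : ℝ), 0 ≤ T → ∀ x : ℝ → EuclideanSpace ℝ (Fin n),
      (∀ t ∈ Icc 0 T, HasDerivAt x (f (x t)) t) →
      (∀ t ∈ Icc 0 T, x t ∈ X) →
      x 0 ∈ XI →
      ∀ t ∈ Icc 0 T, x t ∉ XU := by
  intro T hT x hx hxX hx0 t ht hmem
  set g : ℝ → ℝ := fun u => B (x u) with hgdef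
  have hderiv : ∀ u ∈ Icc (0:ℝ) T,
      HasDerivAt g ((inner ℝ (gradient B (x u)) (f (x u)) : ℝ)) u := by
    intro u hu
    have h1 := hx u hu
    have h2 : HasFDerivAt B ((InnerProductSpace.toDual ℝ _) (gradient B (x u))) (x u) :=
      ((hB (x u)).hasGradientAt).hasFDerivAt
    have := h2.comp_hasDerivAt u h1
    exact this
  have hgt : 0 < g t := hU _ hmem
  have hg0 : g 0 ≤ 0 := hI _ hx0
  have ht0 : 0 < t := by
    rcases lt_or_eq_of_le ht.1 with h | h
    · exact h
    · exfalso; rw [← h] at hgt; linarith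
  -- the set of times in [0,t] where g ≤ 0
  set S : Set ℝ := {u | u ∈ Icc (0:ℝ) t ∧ g u ≤ 0} with hSdef
  have hsubIcc : Icc (0:ℝ) t ⊆ Icc 0 T := Icc_subset_Icc le_rfl ht.2
  have hcont : ContinuousOn g (Icc 0 t) := fun u hu =>
    ((hderiv u (hsubIcc hu)).continuousAt).continuousWithinAt
  have hSclosed : IsClosed S := by
    have : S = Icc (0:ℝ) t ∩ g ⁻¹' Iic 0 := by
      ext u; simp only [hSdef, mem_setOf_eq, mem_inter_iff, mem_preimage, mem_Iic]
    rw [this]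
    exact hcont.preimage_isClosed_of_isClosed isClosed_Icc isClosed_Iic
  have hSsub : S ⊆ Icc 0 t := fun u hu => hu.1
  have hScpt : IsCompact S := isCompact_Icc.of_isClosed_subset hSclosed hSsub
  have hSne : S.Nonempty := ⟨0, ⟨le_rfl, le_of_lt ht0⟩, hg0⟩
  obtain ⟨hsS⟩ : ∃ _ : sSup S ∈ S, True := ⟨hScpt.sSup_mem hSne, trivial⟩
  set s := sSup S with hsdef
  have hsIcc : s ∈ Icc (0:ℝ) t := hsS.1
  have hgs : g s ≤ 0 := hsS.2
  have hst : s < t := lt_of_le_of_ne hsIcc.2 (by intro h; rw [h] at hgs; linarith)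
  -- g is positive on (s, t]
  have hpos : ∀ u ∈ Ioc s t, 0 < g u := by
    intro u hu
    by_contra h
    push_neg at h
    have huS : u ∈ S := ⟨⟨le_trans hsIcc.1 hu.1.le, hu.2⟩, h⟩
    exact absurd (le_csSup hScpt.bddAbove huS) (not_le.mpr hu.1)
  -- get a point u ∈ Ioc s t with g u < 0, a contradiction
  have hIoc_mem : Ioc s t ∈ nhdsWithin s (Ioi s) := Ioc_mem_nhdsGT_of_mem ⟨le_rfl, hst⟩
  rcases eq_or_lt_of_le hgs with hgs0 | hgsneg
  · -- g s = 0 : use the derivative condition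
    have hsT : s ∈ Icc (0:ℝ) T := hsubIcc hsIcc
    have hds := hderiv s hsT
    have hneg : (inner ℝ (gradient B (x s)) (f (x s)) : ℝ) < 0 :=
      hL _ (hxX s hsT) hgs0
    have htend := hasDerivAt_iff_tendsto_slope.mp hds
    have hev : ∀ᶠ u in nhdsWithin s {s}ᶜ, slope g s u < 0 :=
      htend.eventually (eventually_lt_nhds hneg)
    have hle : nhdsWithin s (Ioi s) ≤ nhdsWithin s {s}ᶜ :=
      nhdsWithin_mono s (fun u hu => ne_of_gt hu)
    have := (hev.filter_mono hle).and hIoc_mem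
    rcases this.exists with ⟨u, hslope, huIoc⟩
    have hus : s < u := huIoc.1
    have : g u - g s < 0 := by
      have := hslope
      rw [slope_def_field] at this
      have h2 : (g u - g s) / (u - s) < 0 := by
        simpa [div_eq_inv_mul] using this
      have := (div_neg_iff).mp h2
      rcases this with ⟨h3, h4⟩ | ⟨h3, h4⟩
      · linarith
      · exact h3
    have : g u < 0 := by rw [← hgs0]; linarith
    exact absurd (hpos u huIoc) (not_lt.mpr this.le)
  · -- g s < 0 : use continuity
    have hcs : ContinuousAt g s := (hderiv s (hsubIcc hsIcc)).continuousAt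
    have hev : ∀ᶠ u in nhds s, g u < 0 := hcs.eventually_lt_const hgsneg
    have hev' : ∀ᶠ u in nhdsWithin s (Ioi s), g u < 0 :=
      eventually_nhdsWithin_of_eventually_nhds hev
    rcases (hev'.and hIoc_mem).exists with ⟨u, hgu, huIoc⟩
    exact absurd (hpos u huIoc) (not_lt.mpr hgu.le)
end

section
/- Let X ⊆ ℝⁿ, X_I ⊆ X, X_U ⊆ X, let f : ℝⁿ → ℝⁿ be a vector field, let B : ℝⁿ → ℝ be differentiable, and let ε > 0. Suppose there are real numbers b_U, b̄_I, and b̄₁, …, b̄_N together with sets Z₁, …, Z_N ⊆ ℝⁿ such that: (i) b_U ≤ B(x) for all x ∈ X_U; (ii) B(x) ≤ b̄_I for all x ∈ X_I; (iii) {x ∈ X : B(x) = 0} ⊆ Z₁ ∪ ⋯ ∪ Z_N; and (iv) L_f B(x) ≤ b̄ᵢ for all x ∈ Zᵢ and all i ∈ {1,…,N}. If the set-based loss L = max(0, −b_U + ε) + max(0, b̄_I) + Σᵢ₌₁ᴺ max(0, b̄ᵢ + ε) equals 0, then the system ẋ = f(x) is safe: for every T ≥ 0 and every trajectory x : [0,T]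 → ℝⁿ of ẋ = f(x) with x(t) ∈ X for all t ∈ [0,T] and x(0) ∈ X_I, we have x(t) ∉ X_U for all t ∈ [0,T]. -/
open Set Topology Filter

/-- **Soundness of the set-based loss.**
If the set-based loss
`max(0, −b_U + ε) + max(0, b̄_I) + ∑ i, max(0, b̄ i + ε)` is zero, where
`b_U` is a lower bound of `B` on the unsafe set, `b̄_I` an upper bound of `B`
on the initial set, the sets `Z i` cover the zero-level set of `B` in `X`, and
`b̄ i` bounds the Lie derivative `⟪∇B(x), f(x)⟫` on `Z i`, then the system
`ẋ = f(x)` is safe. -/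
theorem set_based_loss_soundness {n N : ℕ}
    (X XI XU : Set (EuclideanSpace ℝ (Fin n)))
    (hXI : XI ⊆ X) (hXU : XU ⊆ X)
    (f : EuclideanSpace ℝ (Fin n) → EuclideanSpace ℝ (Fin n))
    (B : EuclideanSpace ℝ (Fin n) → ℝ) (hB : Differentiable ℝ B)
    (ε : ℝ) (hε : 0 < ε)
    (bU bI : ℝ) (bbar : Fin N → ℝ) (Z : Fin N → Set (EuclideanSpace ℝ (Fin n)))
    (hbU : ∀ x ∈ XU, bU ≤ B x)
    (hbI : ∀ x ∈ XI, B x ≤ bI)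
    (hcover : {x ∈ X | B x = 0} ⊆ ⋃ i, Z i)
    (hbbar : ∀ i : Fin N, ∀ x ∈ Z i, (inner ℝ (gradient B x) (f x) : ℝ) ≤ bbar i)
    (hloss : max 0 (-bU + ε) + max 0 bI + ∑ i, max 0 (bbar i + ε) = 0) :
    ∀ (T : ℝ), 0 ≤ T → ∀ x : ℝ → EuclideanSpace ℝ (Fin n),
      (∀ t ∈ Icc 0 T, HasDerivAt x (f (x t)) t) →
      (∀ t ∈ Icc 0 T, x t ∈ X) →
      x 0 ∈ XI →
      ∀ t ∈ Icc 0 T, x t ∉ XU := by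
  -- Extract bounds from the zero loss
  have hA0 : (0:ℝ) ≤ max 0 (-bU + ε) := le_max_left _ _
  have hB0 : (0:ℝ) ≤ max 0 bI := le_max_left _ _
  have hS0 : (0:ℝ) ≤ ∑ i, max 0 (bbar i + ε) :=
    Finset.sum_nonneg fun i _ => le_max_left _ _
  have hbUε : ε ≤ bU := by
    have : -bU + ε ≤ max 0 (-bU + ε) := le_max_right _ _
    linarith
  have hbI0 : bI ≤ 0 := by
    have : bI ≤ max 0 bI := le_max_right _ _
    linarith
  have hbbarε : ∀ i : Fin N, bbar i ≤ -ε := by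
    intro i
    have h1 : max 0 (bbar i + ε) ≤ ∑ j, max 0 (bbar j + ε) :=
      Finset.single_le_sum (f := fun j => max 0 (bbar j + ε)) (fun j _ => le_max_left _ _) (Finset.mem_univ i)
    have h2 : bbar i + ε ≤ max 0 (bbar i + ε) := le_max_right _ _
    linarith
  intro T hT x hx' hxX hx0
  set g : ℝ → ℝ := fun t => B (x t) with hg_def
  have hg : ∀ t ∈ Icc 0 T,
      HasDerivAt g (inner ℝ (gradient B (x t)) (f (x t)) : ℝ) t := by
    intro t ht
    have h1 : HasFDerivAt B
        (InnerProductSpace.toDual ℝ _ (gradient B (x t))) (x t) :=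
      (hB (x t)).hasGradientAt.hasFDerivAt
    have h2 := h1.comp_hasDerivAt t (hx' t ht)
    exact h2
  -- Main claim: g t ≤ 0 on [0, T]
  have hgle : ∀ t ∈ Icc 0 T, g t ≤ 0 := by
    by_contra hcon
    push_neg at hcon
    obtain ⟨t₁, ht₁, hgt₁⟩ := hcon
    have hg0 : g 0 ≤ 0 := le_trans (hbI _ hx0) hbI0
    set S : Set ℝ := {t ∈ Icc 0 t₁ | g t ≤ 0} with hS_def
    have hsubT : Icc 0 t₁ ⊆ Icc 0 T := Icc_subset_Icc le_rfl ht₁.2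
    have hScont : ContinuousOn g (Icc 0 t₁) := fun t ht =>
      ((hg t (hsubT ht)).differentiableAt.continuousAt).continuousWithinAt
    have hSclosed : IsClosed S := by
      have : S = Icc 0 t₁ ∩ g ⁻¹' Iic 0 := by
        ext t; simp [hS_def]
      rw [this]
      exact hScont.preimage_isClosed_of_isClosed isClosed_Icc isClosed_Iic
    have hSne : S.Nonempty := ⟨0, ⟨le_rfl, ht₁.1⟩, hg0⟩
    have hSbdd : BddAbove S := ⟨t₁, fun t ht => ht.1.2⟩
    set s := sSup S with hs_def
    have hsS : s ∈ S := hSclosed.csSup_mem hSne hSbdd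
    have hs0 : 0 ≤ s := hsS.1.1
    have hst₁ : s < t₁ := lt_of_le_of_ne hsS.1.2 (by
      intro h; rw [h] at hsS; exact absurd hsS.2 (not_le.mpr hgt₁))
    have hsT : s ∈ Icc 0 T := ⟨hs0, le_trans hsS.1.2 ht₁.2⟩
    have hgpos : ∀ u ∈ Ioc s t₁, 0 < g u := by
      intro u hu
      by_contra h
      push_neg at h
      have huS : u ∈ S := ⟨⟨le_trans hs0 hu.1.le, hu.2⟩, h⟩
      exact absurd (le_csSup hSbdd huS) (not_le.mpr hu.1)
    have hIoc : Ioc s t₁ ∈ 𝓝[>] s := Ioc_mem_nhdsGT_of_mem ⟨le_rfl, hst₁⟩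
    -- g s cannot be negative
    have hgs0 : g s = 0 := by
      rcases lt_or_eq_of_le hsS.2 with hlt | heq
      · exfalso
        have hcs : ContinuousAt g s := (hg s hsT).differentiableAt.continuousAt
        have hev : ∀ᶠ u in 𝓝[>] s, g u < 0 :=
          (hcs.eventually_lt_const hlt).filter_mono nhdsWithin_le_nhds
        obtain ⟨u, hu1, hu2⟩ := (hev.and (eventually_of_mem hIoc fun _ h => h)).exists
        exact absurd (hgpos u hu2) (not_lt.mpr hu1.le)
      · exact heq
    -- Lie derivative at s is ≤ -ε
    obtain ⟨i, hi⟩ : ∃ i, x s ∈ Z i := by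
      have : x s ∈ ⋃ i, Z i := hcover ⟨hxX s hsT, hgs0⟩
      exact mem_iUnion.mp this
    have hdneg : (inner ℝ (gradient B (x s)) (f (x s)) : ℝ) ≤ -ε :=
      le_trans (hbbar i _ hi) (hbbarε i)
    -- But the slope from the right is nonnegative, so the derivative is ≥ 0
    have hT : Filter.Tendsto (slope g s) (𝓝[>] s)
        (𝓝 (inner ℝ (gradient B (x s)) (f (x s)) : ℝ)) :=
      ((hasDerivAt_iff_tendsto_slope.mp (hg s hsT)).mono_left
        (nhdsWithin_mono s fun u hu => ne_of_gt hu))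
    have hslope : ∀ᶠ u in 𝓝[>] s, 0 ≤ slope g s u := by
      filter_upwards [hIoc, self_mem_nhdsWithin] with u hu hu'
      have h1 : 0 < u - s := sub_pos.mpr hu'
      have h2 : 0 ≤ g u - g s := by
        rw [hgs0, sub_zero]; exact (hgpos u hu).le
      rw [slope_def_field]
      exact div_nonneg h2 h1.le
    have : (0:ℝ) ≤ inner ℝ (gradient B (x s)) (f (x s)) :=
      ge_of_tendsto hT hslope
    linarith
  intro t ht hxt
  have h1 : bU ≤ g t := hbU _ hxt
  have h2 : g t ≤ 0 := hgle t ht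
  linarith
end

section
/- Let T > 0 and let g : [0,T] → ℝ be differentiable. If g(0) ≤ 0 and for every t ∈ [0,T] with g(t) = 0 the derivative satisfies g'(t) < 0, then g(t) ≤ 0 for all t ∈ [0,T]. -/
open Set

/-- **Scalar invariance lemma.** If `g` is differentiable on `[0, T]` with
derivative `g'`, `g 0 ≤ 0`, and `g' t < 0` whenever `g t = 0` for `t ∈ [0, T]`,
then `g t ≤ 0` on all of `[0, T]`. -/
theorem nonpos_of_deriv_neg_on_zero_level (T : ℝ) (hT : 0 < T)
    (g g' : ℝ → ℝ)
    (hg : ∀ t ∈ Icc 0 T, HasDerivAt g (g' t) t)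
    (h0 : g 0 ≤ 0)
    (hzero : ∀ t ∈ Icc 0 T, g t = 0 → g' t < 0) :
    ∀ t ∈ Icc 0 T, g t ≤ 0 := by
  by_contra hcon
  push_neg at hcon
  obtain ⟨t, ht, hgt⟩ := hcon
  -- the set of times in [0, t] where g is positive
  set S : Set ℝ := {u | u ∈ Icc (0:ℝ) t ∧ 0 < g u} with hS
  have hSne : S.Nonempty := ⟨t, ⟨⟨ht.1, le_refl t⟩, hgt⟩⟩
  have hSbdd : BddBelow S := ⟨0, fun u hu => hu.1.1⟩
  set s := sInf S with hs
  have hs0 : 0 ≤ s := le_csInf hSne fun u hu => hu.1.1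
  have hst : s ≤ t := csInf_le hSbdd ⟨⟨ht.1, le_refl t⟩, hgt⟩
  have hsT : s ∈ Icc (0:ℝ) T := ⟨hs0, hst.trans ht.2⟩
  have hcont : ContinuousAt g s := (hg s hsT).continuousAt
  -- g s ≥ 0 : points of S approach s from the right
  have hge : 0 ≤ g s := by
    by_contra hlt
    push_neg at hlt
    have hev : ∀ᶠ u in nhds s, g u < 0 := hcont.eventually_lt continuousAt_const hlt
    obtain ⟨ε, hε, hball⟩ := Metric.eventually_nhds_iff.mp hev
    obtain ⟨u, huS, hus⟩ := Real.lt_sInf_add_pos hSne hε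
    have : dist u s < ε := by
      rw [Real.dist_eq, abs_lt]
      constructor <;> [linarith [csInf_le hSbdd huS]; linarith]
    exact absurd huS.2 (not_lt.mpr (hball this).le)
  -- g s ≤ 0 : either s = 0 or g ≤ 0 to the left of s
  have hle : g s ≤ 0 := by
    rcases eq_or_lt_of_le hs0 with h | h
    · rw [← h]; exact h0
    · by_contra hpos
      push_neg at hpos
      obtain ⟨ε, hε, hball⟩ := Metric.eventually_nhds_iff.mp
        (continuousAt_const.eventually_lt hcont hpos)
      set u := max (s - ε / 2) (s / 2) with hu
      have hu_lt : u < s := max_lt (by linarith) (by linarith)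
      have hu_pos : 0 < u := lt_of_lt_of_le (by linarith) (le_max_right _ _)
      have hu_dist : dist u s < ε := by
        rw [Real.dist_eq, abs_lt]
        constructor
        · have : s - ε / 2 ≤ u := le_max_left _ _
          linarith
        · linarith
      have huS : u ∈ S := ⟨⟨hu_pos.le, hu_lt.le.trans hst⟩, hball hu_dist⟩
      exact absurd (csInf_le hSbdd huS) (not_le.mpr hu_lt)
  have hgs : g s = 0 := le_antisymm hle hge
  have hder : g' s < 0 := hzero s hsT hgs
  -- the slope tends to g' s < 0, so slopes are negative just right of s
  have hslope : Filter.Tendsto (slope g s) (nhdsWithin s {s}ᶜ) (nhds (g' s)) :=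
    hasDerivAt_iff_tendsto_slope.mp (hg s hsT)
  have hslope' : Filter.Tendsto (slope g s) (nhdsWithin s (Ioi s)) (nhds (g' s)) :=
    hslope.mono_left (nhdsWithin_mono s (fun u hu => ne_of_gt hu))
  have hevneg : ∀ᶠ u in nhdsWithin s (Ioi s), slope g s u < 0 :=
    hslope' (Iio_mem_nhds hder)
  obtain ⟨b, hb, hIoo⟩ := mem_nhdsGT_iff_exists_Ioo_subset.mp hevneg
  -- but there is u ∈ S with s < u < b, giving positive slope: contradiction
  obtain ⟨u, huS, hub⟩ := Real.lt_sInf_add_pos hSne (sub_pos.mpr hb)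
  have hsu : s < u := by
    rcases eq_or_lt_of_le (csInf_le hSbdd huS) with h | h
    · exfalso; rw [← h] at huS; exact absurd hgs (ne_of_gt huS.2)
    · exact h
  have hmem : u ∈ Ioo s b := ⟨hsu, by linarith⟩
  have hneg : slope g s u < 0 := hIoo hmem
  have hposslope : 0 < slope g s u := by
    rw [slope_def_field, div_pos_iff]
    left
    exact ⟨by rw [hgs]; simpa using huS.2, sub_pos.mpr hsu⟩
  linarith
end

section
/- Let Z₁ = {c₁ + G₁β : β ∈ [-1,1]^{q₁}} ⊆ ℝⁿ and Z₂ = {c₂ + G₂γ : γ ∈ [-1,1]^{q₂}} ⊆ ℝⁿ be zonotopes with centers c₁, c₂ ∈ ℝⁿ and generator matrices G₁ ∈ ℝ^{n×q₁}, G₂ ∈ ℝ^{n×q₂}. Then for all β ∈ [-1,1]^{q₁} and γ ∈ [-1,1]^{q₂}, the inner product (c₁ + G₁β)ᵀ(c₂ + G₂γ) can be written as c' + Σⱼ g'ⱼ δⱼ for some δ with all entries in [-1,1], where c' = c₁ᵀc₂ and the list of scalar generators g' consists of the entries of c₁ᵀG₂ (a row of length q₂), the entries of G₁ᵀc₂ (a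 vector of length q₁), and, for each i ∈ {1,…,q₁} and j ∈ {1,…,q₂}, the entry (G₁ᵀG₂)_{(i,j)}. Consequently, the set of inner products {x₁ᵀx₂ : x₁ ∈ Z₁, x₂ ∈ Z₂} is contained in the one-dimensional zonotope with center c' and these q₂ + q₁ + q₁·q₂ generators. -/
open Set

/-- The zonotope with center `c ∈ ℝⁿ` and generator matrix `G ∈ ℝ^{n×q}`:
the set `{c + Gβ : β ∈ [-1,1]^q}`. -/
def zonotope {n q : ℕ} (c : Fin n → ℝ) (G : Matrix (Fin n) (Fin q) ℝ) :
    Set (Fin n → ℝ) :=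
  {x | ∃ β : Fin q → ℝ, (∀ i, β i ∈ Icc (-1 : ℝ) 1) ∧ x = c + G.mulVec β}

/-- The scalar generators of the zonotope enclosure of the inner product of two
zonotopes `Z(c₁, G₁)` and `Z(c₂, G₂)`: the entries of the row `c₁ᵀG₂`
(length `q₂`), the entries of the vector `G₁ᵀc₂` (length `q₁`), and the entries
`(G₁ᵀG₂)_{(i,j)}` for `i ∈ [q₁]`, `j ∈ [q₂]`. -/
def innerProdGenerators {n q₁ q₂ : ℕ} (c₁ c₂ : Fin n → ℝ)
    (G₁ : Matrix (Fin n) (Fin q₁) ℝ) (G₂ : Matrix (Fin n) (Fin q₂) ℝ) :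
    (Fin q₂ ⊕ Fin q₁ ⊕ Fin q₁ × Fin q₂) → ℝ :=
  Sum.elim (fun j => Matrix.vecMul c₁ G₂ j)
    (Sum.elim (fun i => Matrix.mulVec G₁.transpose c₂ i)
      (fun p => (G₁.transpose * G₂) p.1 p.2))

lemma inner_key {n q₁ q₂ : ℕ} (c₁ c₂ : Fin n → ℝ)
    (G₁ : Matrix (Fin n) (Fin q₁) ℝ) (G₂ : Matrix (Fin n) (Fin q₂) ℝ)
    (β : Fin q₁ → ℝ) (γ : Fin q₂ → ℝ) :
    dotProduct (c₁ + G₁.mulVec β) (c₂ + G₂.mulVec γ)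
      = dotProduct c₁ c₂
        + ∑ j, innerProdGenerators c₁ c₂ G₁ G₂ j *
            (Sum.elim γ (Sum.elim β fun p => β p.1 * γ p.2)) j := by
  simp only [innerProdGenerators, Fintype.sum_sum_type, Fintype.sum_prod_type,
    Sum.elim_inl, Sum.elim_inr, add_dotProduct, dotProduct_add]
  rw [Matrix.dotProduct_mulVec c₁ G₂ γ]
  rw [show dotProduct (G₁.mulVec β) c₂
      = dotProduct (Matrix.mulVec G₁.transpose c₂) β by
    rw [dotProduct_comm, Matrix.dotProduct_mulVec, dotProduct_comm,
      ← Matrix.mulVec_transpose, dotProduct_comm]]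
  rw [show dotProduct (G₁.mulVec β) (G₂.mulVec γ)
      = ∑ i, ∑ j, (G₁.transpose * G₂) i j * (β i * γ j) by
    rw [Matrix.dotProduct_mulVec, ← Matrix.vecMul_transpose, Matrix.vecMul_vecMul,
      ← Matrix.dotProduct_mulVec]
    simp only [dotProduct, Matrix.mulVec, Finset.mul_sum]
    exact Finset.sum_congr rfl fun i _ => Finset.sum_congr rfl fun j _ => by ring]
  simp only [dotProduct]
  ring

/-- **Enclosure of the inner product of two zonotopes.** Every inner product
`(c₁ + G₁β)ᵀ(c₂ + G₂γ)` with factors `β, γ ∈ [-1,1]` can be written as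
`c₁ᵀc₂ + ∑ⱼ g'ⱼ δⱼ` with `δ ∈ [-1,1]`, where the `g'ⱼ` are the generators of
`innerProdGenerators`; consequently the set of inner products of points of the
two zonotopes is contained in the corresponding one-dimensional zonotope with
center `c₁ᵀc₂`. -/
theorem zonotope_inner_product_enclosure {n q₁ q₂ : ℕ}
    (c₁ c₂ : Fin n → ℝ)
    (G₁ : Matrix (Fin n) (Fin q₁) ℝ) (G₂ : Matrix (Fin n) (Fin q₂) ℝ) :
    (∀ β : Fin q₁ → ℝ, ∀ γ : Fin q₂ → ℝ,
      (∀ i, β i ∈ Icc (-1 : ℝ) 1) → (∀ i, γ i ∈ Icc (-1 : ℝ) 1) →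
      ∃ δ : (Fin q₂ ⊕ Fin q₁ ⊕ Fin q₁ × Fin q₂) → ℝ,
        (∀ j, δ j ∈ Icc (-1 : ℝ) 1) ∧
        dotProduct (c₁ + G₁.mulVec β) (c₂ + G₂.mulVec γ)
          = dotProduct c₁ c₂
            + ∑ j, innerProdGenerators c₁ c₂ G₁ G₂ j * δ j)
    ∧ {r | ∃ x₁ ∈ zonotope c₁ G₁, ∃ x₂ ∈ zonotope c₂ G₂,
          r = dotProduct x₁ x₂}
        ⊆ {r | ∃ δ : (Fin q₂ ⊕ Fin q₁ ⊕ Fin q₁ × Fin q₂) → ℝ,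
            (∀ j, δ j ∈ Icc (-1 : ℝ) 1) ∧
            r = dotProduct c₁ c₂
              + ∑ j, innerProdGenerators c₁ c₂ G₁ G₂ j * δ j} := by
  have key : ∀ β : Fin q₁ → ℝ, ∀ γ : Fin q₂ → ℝ,
      (∀ i, β i ∈ Icc (-1 : ℝ) 1) → (∀ i, γ i ∈ Icc (-1 : ℝ) 1) →
      ∃ δ : (Fin q₂ ⊕ Fin q₁ ⊕ Fin q₁ × Fin q₂) → ℝ,
        (∀ j, δ j ∈ Icc (-1 : ℝ) 1) ∧
        dotProduct (c₁ + G₁.mulVec β) (c₂ + G₂.mulVec γ)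
          = dotProduct c₁ c₂
            + ∑ j, innerProdGenerators c₁ c₂ G₁ G₂ j * δ j := by
    intro β γ hβ hγ
    refine ⟨Sum.elim γ (Sum.elim β fun p => β p.1 * γ p.2), ?_, inner_key c₁ c₂ G₁ G₂ β γ⟩
    rintro (j | i | p)
    · exact hγ j
    · exact hβ i
    · have h1 : |β p.1| ≤ 1 := abs_le.mpr ⟨(hβ p.1).1, (hβ p.1).2⟩
      have h2 : |γ p.2| ≤ 1 := abs_le.mpr ⟨(hγ p.2).1, (hγ p.2).2⟩
      have : |β p.1 * γ p.2| ≤ 1 := by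
        rw [abs_mul]
        exact mul_le_one₀ h1 (abs_nonneg _) h2
      simpa [mem_Icc] using abs_le.mp this
  refine ⟨key, ?_⟩
  rintro r ⟨x₁, ⟨β, hβ, rfl⟩, x₂, ⟨γ, hγ, rfl⟩, rfl⟩
  obtain ⟨δ, hδ, h⟩ := key β γ hβ hγ
  exact ⟨δ, hδ, h⟩
end

section
/- Let B : ℝⁿ → ℝ, let Z_x = {c_x + G_x β : β ∈ [-1,1]^{q₀}} ⊆ ℝⁿ be a zonotope with center c_x ∈ ℝⁿ and generator matrix G_x ∈ ℝ^{n×q₀}, and suppose the output of B over Z_x admits a shared-factor enclosure: there exist c_y ∈ ℝ, a row vector G_{y,1} ∈ ℝ^{1×q₀}, and a row vector G_{y,2} ∈ ℝ^{1×r} such that for every β ∈ [-1,1]^{q₀} there exists γ ∈ [-1,1]^{r} with B(c_x + G_x β) = c_y + G_{y,1}β + G_{y,2}γ. Then every zero of B in Z_x lies in the constrained zonotope obtained by restricting the factors: {x ∈ Z_x : B(x) = 0} ⊆ {c_x + G_x β : β ∈ [-1,1]^{q₀}, −G_{y,1}β ≤ c_y + Σⱼ|G_{y,2(1,j)}| and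 G_{y,1}β ≤ −c_y + Σⱼ|G_{y,2(1,j)}|}. -/
open Set

/-- **Enclosing the zero-level set by a constrained zonotope.** If the output
of `B` over the zonotope `Z(c_x, G_x)` admits a shared-factor enclosure with
output center `c_y`, shared generators `g₁` (a row of length `q₀`) and fresh
generators `g₂` (a row of length `r`), then every zero of `B` in `Z(c_x, G_x)`
lies in the constrained zonotope obtained by constraining the shared factors
`β` with `−g₁β ≤ c_y + ∑ⱼ|g₂ⱼ|` and `g₁β ≤ −c_y + ∑ⱼ|g₂ⱼ|`. -/
theorem zero_level_set_constrained_zonotope_enclosure {n q₀ r : ℕ}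
    (B : (Fin n → ℝ) → ℝ)
    (cx : Fin n → ℝ) (Gx : Matrix (Fin n) (Fin q₀) ℝ)
    (cy : ℝ) (g₁ : Fin q₀ → ℝ) (g₂ : Fin r → ℝ)
    (hshared : ∀ β : Fin q₀ → ℝ, (∀ i, β i ∈ Icc (-1 : ℝ) 1) →
      ∃ γ : Fin r → ℝ, (∀ j, γ j ∈ Icc (-1 : ℝ) 1) ∧
        B (cx + Gx.mulVec β)
          = cy + dotProduct g₁ β + dotProduct g₂ γ) :
    {x ∈ zonotope cx Gx | B x = 0}
      ⊆ {x | ∃ β : Fin q₀ → ℝ, (∀ i, β i ∈ Icc (-1 : ℝ) 1) ∧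
          -dotProduct g₁ β ≤ cy + ∑ j, |g₂ j| ∧
          dotProduct g₁ β ≤ -cy + ∑ j, |g₂ j| ∧
          x = cx + Gx.mulVec β} := by
  rintro x ⟨⟨β, hβ, rfl⟩, hB⟩
  obtain ⟨γ, hγ, heq⟩ := hshared β hβ
  refine ⟨β, hβ, ?_, ?_, rfl⟩ <;>
  · have hbound : |dotProduct g₂ γ| ≤ ∑ j, |g₂ j| := by
      calc |dotProduct g₂ γ| ≤ ∑ j, |g₂ j * γ j| :=
            Finset.abs_sum_le_sum_abs _ _
        _ ≤ ∑ j, |g₂ j| := by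
            refine Finset.sum_le_sum fun j _ => ?_
            rw [abs_mul]
            have := abs_le.mpr (hγ j)
            nlinarith [abs_nonneg (g₂ j)]
    rw [hB] at heq
    have := abs_le.mp hbound
    linarith [this.1, this.2]
end
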